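/- arXiv:1108.4381 — 4 statements merged into one kernel-verified Lean document; each statement's English description precedes it below -/
import Mathlib

section
/- If f ∈ BD_p(Γ) satisfies f(x) ≥ 1 for all x ∈ V, then the pointwise reciprocal 1/f also belongs to BD_p(Γ); in particular, f is invertible in the Banach algebra BD_p(Γ). -/
open Filter Topology
open scoped ENNReal

namespace PHB

variable {V : Type*}

/-- A graph has bounded degree if there is a uniform finite bound on the
number of neighbors of each vertex. -/
def BoundedDegree (G : SimpleGraph V) : Prop :=
  ∃ k : ℕ, ∀ x : V, (G.neighborSet x).Finite ∧ (G.neighborSet x).ncard ≤ k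

/-- The `p`-Dirichlet sum of `f` over a set `S` of vertices:
`∑_{x ∈ S} ∑_{y ∈ N_x} |f y - f x| ^ p`, valued in `ℝ≥0∞`. -/
noncomputable def IpOn (G : SimpleGraph V) (p : ℝ) (S : Set V) (f : V → ℝ) : ℝ≥0∞ :=
  ∑' x : S, ∑' y : G.neighborSet (x : V), ENNReal.ofReal (|f (y : V) - f (x : V)| ^ p)

/-- The total `p`-Dirichlet sum `I_p(f, V)`. -/
noncomputable def Ip (G : SimpleGraph V) (p : ℝ) (f : V → ℝ) : ℝ≥0∞ :=
  IpOn G p Set.univ f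

/-- `D_p(Γ)`: real functions with finite `p`-Dirichlet sum. -/
def Dirichlet (G : SimpleGraph V) (p : ℝ) : Set (V → ℝ) :=
  {f | Ip G p f ≠ ∞}

/-- `ℓ^∞(Γ)`: bounded real functions on the vertices. -/
def BddFun : Set (V → ℝ) :=
  {f | ∃ C : ℝ, ∀ x, |f x| ≤ C}

/-- `BD_p(Γ) = D_p(Γ) ∩ ℓ^∞(Γ)`. -/
def BDp (G : SimpleGraph V) (p : ℝ) : Set (V → ℝ) :=
  Dirichlet G p ∩ BddFun

/-- The sup norm `‖f‖_∞`. -/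
noncomputable def supNorm [Nonempty V] (f : V → ℝ) : ℝ :=
  ⨆ x, |f x|

/-- The norm `‖f‖_{BD_p} = I_p(f,V)^{1/p} + ‖f‖_∞` on `BD_p(Γ)`. -/
noncomputable def BDpNorm [Nonempty V] (G : SimpleGraph V) (p : ℝ) (f : V → ℝ) : ℝ :=
  (Ip G p f).toReal ^ (1 / p) + supNorm f

/-- The norm `‖f‖_{D_p} = (I_p(f,V) + |f o|^p)^{1/p}` on `D_p(Γ)`, for a fixed vertex `o`. -/
noncomputable def DpNorm (G : SimpleGraph V) (p : ℝ) (o : V) (f : V → ℝ) : ℝ :=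
  ((Ip G p f).toReal + |f o| ^ p) ^ (1 / p)

/-- The `p`-Laplacian `Δ_p f (x) = ∑_{y ∈ N_x} |f y - f x|^{p-2} (f y - f x)`
(with the convention that a summand vanishes when `f y = f x`). -/
noncomputable def pLap (G : SimpleGraph V) (p : ℝ) (f : V → ℝ) (x : V) : ℝ :=
  ∑' y : G.neighborSet x, |f (y : V) - f x| ^ (p - 2) * (f (y : V) - f x)

/-- `BHD_p(Γ)`: bounded `p`-harmonic functions with finite `p`-Dirichlet sum. -/
def BHDp (G : SimpleGraph V) (p : ℝ) : Set (V → ℝ) :=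
  {f | f ∈ BDp G p ∧ ∀ x, pLap G p f x = 0}

/-- The outer boundary `∂S`: vertices outside `S` with a neighbor in `S`. -/
def outerBoundary (G : SimpleGraph V) (S : Set V) : Set V :=
  {x | x ∉ S ∧ ∃ y ∈ S, G.Adj x y}

/-- A set of vertices is connected if the induced subgraph is connected. -/
def ConnectedSubset (G : SimpleGraph V) (S : Set V) : Prop :=
  (G.induce S).Connected

/-- `C` is a connected component of `S`: a maximal connected subset of `S`. -/
def IsComponentOf (G : SimpleGraph V) (C S : Set V) : Prop :=
  C.Nonempty ∧ C ⊆ S ∧ ConnectedSubset G C ∧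
    ∀ C', C ⊆ C' → C' ⊆ S → ConnectedSubset G C' → C' = C

/-- `u` is an inner potential for `U`: a nonnegative member of `BD_p(Γ)` that is
`p`-harmonic on `U`, vanishes on `∂U`, and has supremum `1` over `U`. -/
def InnerPotential (G : SimpleGraph V) (p : ℝ) (U : Set V) (u : V → ℝ) : Prop :=
  u ∈ BDp G p ∧ (∀ x, 0 ≤ u x) ∧ (∀ x ∈ U, pLap G p u x = 0) ∧
    (∀ x ∈ outerBoundary G U, u x = 0) ∧ IsLUB (u '' U) 1

/-- A `D_p`-massive subset: an infinite connected set with nonempty outer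
boundary admitting an inner potential. -/
def DpMassive (G : SimpleGraph V) (p : ℝ) (U : Set V) : Prop :=
  U.Infinite ∧ ConnectedSubset G U ∧ (outerBoundary G U).Nonempty ∧
    ∃ u, InnerPotential G p U u

/-- A character of the Banach algebra `BD_p(Γ)`: a nonzero (equivalently,
unital) ring homomorphism `BD_p(Γ) → ℂ`. -/
structure PCharacter (G : SimpleGraph V) (p : ℝ) where
  toFun : {f : V → ℝ // f ∈ BDp G p} → ℂ
  map_add' : ∀ f g h : {f : V → ℝ // f ∈ BDp G p},
    (h : V → ℝ) = (f : V → ℝ) + (g : V → ℝ) → toFun h = toFun f + toFun g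
  map_mul' : ∀ f g h : {f : V → ℝ // f ∈ BDp G p},
    (h : V → ℝ) = (f : V → ℝ) * (g : V → ℝ) → toFun h = toFun f * toFun g
  map_one' : ∀ h : {f : V → ℝ // f ∈ BDp G p}, (h : V → ℝ) = 1 → toFun h = 1

/-- `Sp(BD_p(Γ))` carries the weak-* topology: the topology of pointwise
convergence on elements of `BD_p(Γ)`. -/
noncomputable instance (G : SimpleGraph V) (p : ℝ) : TopologicalSpace (PCharacter G p) :=
  TopologicalSpace.induced (fun χ => χ.toFun) inferInstance

/-- The evaluation map `i : V → Sp(BD_p(Γ))`, `(i x) f = f x`. -/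
def evalChar (G : SimpleGraph V) (p : ℝ) (x : V) : PCharacter G p where
  toFun f := ((f : V → ℝ) x : ℂ)
  map_add' f g h hh := by
    show ((h : V → ℝ) x : ℂ) = ((f : V → ℝ) x : ℂ) + ((g : V → ℝ) x : ℂ)
    rw [hh]; push_cast [Pi.add_apply]; ring
  map_mul' f g h hh := by
    show ((h : V → ℝ) x : ℂ) = ((f : V → ℝ) x : ℂ) * ((g : V → ℝ) x : ℂ)
    rw [hh]; push_cast [Pi.mul_apply]; ring
  map_one' h hh := by
    show ((h : V → ℝ) x : ℂ) = 1
    rw [hh]; simp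

/-- The closure of `C_c(Γ)` in `(D_p(Γ), ‖·‖_{D_p})`. -/
def CcClosure (G : SimpleGraph V) (p : ℝ) (o : V) : Set (V → ℝ) :=
  {f | f ∈ Dirichlet G p ∧ ∀ ε > 0, ∃ g : V → ℝ,
      (Function.support g).Finite ∧ DpNorm G p o (f - g) < ε}

/-- `B(C̄_c)`: the bounded elements of the `D_p`-closure of `C_c(Γ)`. -/
def BCc (G : SimpleGraph V) (p : ℝ) (o : V) : Set (V → ℝ) :=
  CcClosure G p o ∩ BddFun

/-- The `p`-Royden boundary `R_p(Γ) = Sp(BD_p(Γ)) \ i(V)`. -/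
def RoydenBoundary (G : SimpleGraph V) (p : ℝ) : Set (PCharacter G p) :=
  (Set.range (evalChar G p))ᶜ

/-- The `p`-harmonic boundary
`∂_p(Γ) = {χ ∈ R_p(Γ) : χ f = 0 for all f ∈ B(C̄_c)}`. -/
def pHarmonicBoundary (G : SimpleGraph V) (p : ℝ) (o : V) : Set (PCharacter G p) :=
  {χ | χ ∈ RoydenBoundary G p ∧ ∀ f : {f : V → ℝ // f ∈ BDp G p},
      (f : V → ℝ) ∈ BCc G p o → χ.toFun f = 0}

/-- One-sided infinite self-avoiding paths in the subgraph induced on `A`. -/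
def IsPathIn (G : SimpleGraph V) (A : Set V) (γ : ℕ → V) : Prop :=
  Function.Injective γ ∧ (∀ n, G.Adj (γ n) (γ (n + 1))) ∧ ∀ n, γ n ∈ A

/-- `P_A`: the family of one-sided infinite self-avoiding paths in `Γ_A`. -/
def pathsIn (G : SimpleGraph V) (A : Set V) : Set (ℕ → V) :=
  {γ | IsPathIn G A γ}

/-- The `p`-modulus `λ_p(Q)⁻¹` of a path family `Q`: the infimum of
`∑_{e ∈ E} ρ(e)^p` over all densities `ρ` with `∑_{e ∈ Ed(γ)} ρ(e) ≥ 1`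
for every `γ ∈ Q`.  `λ_p(Q) = ∞` corresponds to `pModulus Q = 0`. -/
noncomputable def pModulus (G : SimpleGraph V) (p : ℝ) (Q : Set (ℕ → V)) : ℝ≥0∞ :=
  ⨅ (ρ : Sym2 V → ℝ≥0∞)
    (_ : ∀ γ ∈ Q, 1 ≤ ∑' n : ℕ, ρ s(γ n, γ (n + 1))),
      ∑' e : G.edgeSet, ρ (e : Sym2 V) ^ p

/-- A property `P` holds for `p`-almost every path in `Q` if the family of
paths of `Q` failing `P` has infinite extremal length (zero `p`-modulus). -/
def AlmostEvery (G : SimpleGraph V) (p : ℝ) (Q : Set (ℕ → V)) (P : (ℕ → V) → Prop) : Prop :=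
  pModulus G p {γ ∈ Q | ¬ P γ} = 0

/-- `f(γ) = c` for `p`-almost every path `γ ∈ P_A`. -/
def AsympConst (G : SimpleGraph V) (p : ℝ) (A : Set V) (f : V → ℝ) (c : ℝ) : Prop :=
  AlmostEvery G p (pathsIn G A)
    (fun γ => Tendsto (fun n => f (γ n)) atTop (nhds c))

/-- A set has property AC if every function in `BHD_p(Γ)` is asymptotically
constant on it. -/
def PropertyAC (G : SimpleGraph V) (p : ℝ) (A : Set V) : Prop :=
  ∀ h ∈ BHDp G p, ∃ c : ℝ, AsympConst G p A h c

/-- The `p`-capacity `Cap_p(A, ∞, S)`: the infimum of `I_p(u, S)` over functions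
`u` that are finitely supported on `S ∪ ∂S` and equal to `1` on `A`. -/
noncomputable def pCapacity (G : SimpleGraph V) (p : ℝ) (A S : Set V) : ℝ≥0∞ :=
  ⨅ (u : V → ℝ)
    (_ : ((S ∪ outerBoundary G S) ∩ Function.support u).Finite ∧ ∀ x ∈ A, u x = 1),
      IpOn G p S u

/-- An infinite connected set `S` is `p`-hyperbolic if `Cap_p(A, ∞, S) > 0` for
some nonempty finite set `A`. -/
def pHyperbolic (G : SimpleGraph V) (p : ℝ) (S : Set V) : Prop :=
  S.Infinite ∧ ConnectedSubset G S ∧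
    ∃ A : Set V, A.Finite ∧ A.Nonempty ∧ 0 < pCapacity G p A S

end PHB

open PHB Filter Topology

/-- If `f ∈ BD_p(Γ)` and `f ≥ 1` everywhere, then the pointwise reciprocal
`1/f` is in `BD_p(Γ)`; in particular `f` is invertible in `BD_p(Γ)`. -/
theorem reciprocal_mem_BDp {V : Type*} [Countable V] [Infinite V] (G : SimpleGraph V)
    (hG : G.Connected) (hdeg : BoundedDegree G) (p : ℝ) (hp : 1 < p)
    (f : V → ℝ) (hf : f ∈ BDp G p) (h1 : ∀ x, 1 ≤ f x) :
    (fun x => (f x)⁻¹) ∈ BDp G p ∧ f * (fun x => (f x)⁻¹) = 1 := by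
  have hpos : ∀ x, 0 < f x := fun x => lt_of_lt_of_le one_pos (h1 x)
  have key : ∀ x y : V, |(f y)⁻¹ - (f x)⁻¹| ≤ |f y - f x| := by
    intro x y
    rw [inv_sub_inv (ne_of_gt (hpos y)) (ne_of_gt (hpos x)), abs_div]
    have h1' : 1 ≤ |f y * f x| := by
      rw [abs_of_pos (mul_pos (hpos y) (hpos x))]
      nlinarith [h1 x, h1 y]
    calc |f x - f y| / |f y * f x| ≤ |f x - f y| := div_le_self (abs_nonneg _) h1'
      _ = |f y - f x| := abs_sub_comm _ _
  refine ⟨⟨?_, ⟨1, fun x => ?_⟩⟩, ?_⟩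
  · have hle : Ip G p (fun x => (f x)⁻¹) ≤ Ip G p f := by
      unfold Ip IpOn
      refine ENNReal.tsum_le_tsum fun x => ENNReal.tsum_le_tsum fun y => ?_
      apply ENNReal.ofReal_le_ofReal
      exact Real.rpow_le_rpow (abs_nonneg _) (key _ _) (le_of_lt (lt_trans one_pos hp))
    exact ne_top_of_le_ne_top hf.1 hle
  · rw [abs_inv, abs_of_pos (hpos x)]
    exact inv_le_one_of_one_le₀ (h1 x)
  · funext x
    simp [mul_inv_cancel₀ (ne_of_gt (hpos x))]
end

section
/- For all f, g ∈ BD_p(Γ), the pointwise product fg belongs to BD_p(Γ) and ‖fg‖_{BD_p} ≤ ‖f‖_{BD_p} · ‖g‖_{BD_p}. -/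
open Filter Topology
open scoped ENNReal

open PHB Filter Topology

open scoped ENNReal

/-- Minkowski inequality for `ℝ≥0∞`-valued tsums. -/
lemma ennreal_Lp_add_le_tsum {ι : Type*} (F G : ι → ℝ≥0∞) {p : ℝ} (hp : 1 ≤ p) :
    (∑' i, (F i + G i) ^ p) ^ (1 / p) ≤
      (∑' i, F i ^ p) ^ (1 / p) + (∑' i, G i ^ p) ^ (1 / p) := by
  have hp0 : 0 < p := lt_of_lt_of_le zero_lt_one hp
  set Y : ℝ≥0∞ := (∑' i, F i ^ p) ^ (1 / p) + (∑' i, G i ^ p) ^ (1 / p) with hY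
  have key : ∀ s : Finset ι, ∑ i ∈ s, (F i + G i) ^ p ≤ Y ^ p := by
    intro s
    have h1 : ((∑ i ∈ s, (F i + G i) ^ p) ^ (1 / p)) ^ p ≤ Y ^ p := by
      apply ENNReal.rpow_le_rpow _ hp0.le
      refine le_trans (ENNReal.Lp_add_le s F G hp) ?_
      rw [hY]
      gcongr <;> exact ENNReal.sum_le_tsum s
    calc ∑ i ∈ s, (F i + G i) ^ p
        = ((∑ i ∈ s, (F i + G i) ^ p) ^ (1 / p)) ^ p := by
          rw [← ENNReal.rpow_mul, one_div, inv_mul_cancel₀ hp0.ne', ENNReal.rpow_one]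
      _ ≤ Y ^ p := h1
  have h2 : ∑' i, (F i + G i) ^ p ≤ Y ^ p := by
    rw [ENNReal.tsum_eq_iSup_sum]; exact iSup_le key
  calc (∑' i, (F i + G i) ^ p) ^ (1 / p) ≤ (Y ^ p) ^ (1 / p) :=
        ENNReal.rpow_le_rpow h2 (by positivity)
    _ = Y := by rw [← ENNReal.rpow_mul, mul_one_div, div_self hp0.ne', ENNReal.rpow_one]

/-- `BD_p(Γ)` is closed under pointwise products and the norm is
submultiplicative: `‖fg‖_{BD_p} ≤ ‖f‖_{BD_p} ‖g‖_{BD_p}`. -/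
theorem BDp_submultiplicative {V : Type*} [Countable V] [Infinite V] (G : SimpleGraph V)
    (hG : G.Connected) (hdeg : BoundedDegree G) (p : ℝ) (hp : 1 < p)
    (f g : V → ℝ) (hf : f ∈ BDp G p) (hg : g ∈ BDp G p) :
    f * g ∈ BDp G p ∧ BDpNorm G p (f * g) ≤ BDpNorm G p f * BDpNorm G p g := by
  obtain ⟨hfD, Cf, hCf⟩ := hf
  obtain ⟨hgD, Cg, hCg⟩ := hg
  have hfT : Ip G p f ≠ ∞ := hfD
  have hgT : Ip G p g ≠ ∞ := hgD
  have hp0 : 0 < p := lt_trans zero_lt_one hp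
  have hip : (0:ℝ) < 1 / p := by positivity
  set a := supNorm f with ha
  set b := supNorm g with hb
  have hbddf : BddAbove (Set.range fun x => |f x|) := ⟨Cf, by rintro _ ⟨x, rfl⟩; exact hCf x⟩
  have hbddg : BddAbove (Set.range fun x => |g x|) := ⟨Cg, by rintro _ ⟨x, rfl⟩; exact hCg x⟩
  have haf : ∀ x, |f x| ≤ a := fun x => le_ciSup hbddf x
  have hag : ∀ x, |g x| ≤ b := fun x => le_ciSup hbddg x
  have ha0 : 0 ≤ a := le_trans (abs_nonneg _) (haf (Classical.arbitrary V))
  have hb0 : 0 ≤ b := le_trans (abs_nonneg _) (hag (Classical.arbitrary V))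
  -- rewrite `Ip` as a single tsum over a sigma type
  have IpEq : ∀ h : V → ℝ, Ip G p h =
      ∑' z : (Σ x : V, G.neighborSet x), ENNReal.ofReal |h z.2 - h z.1| ^ p := by
    intro h
    calc Ip G p h
        = ∑' x : V, ∑' y : G.neighborSet x, ENNReal.ofReal (|h y - h x| ^ p) :=
          tsum_univ (fun x : V => ∑' y : G.neighborSet x, ENNReal.ofReal (|h y - h x| ^ p))
      _ = ∑' x : V, ∑' y : G.neighborSet x, ENNReal.ofReal |h y - h x| ^ p :=
          tsum_congr fun x => tsum_congr fun y =>
            (ENNReal.ofReal_rpow_of_nonneg (abs_nonneg _) hp0.le).symm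
      _ = ∑' z : (Σ x : V, G.neighborSet x), ENNReal.ofReal |h z.2 - h z.1| ^ p :=
          (ENNReal.tsum_sigma'
            (fun z : Σ x : V, G.neighborSet x => ENNReal.ofReal |h (z.2 : V) - h z.1| ^ p)).symm
  -- pointwise bound
  have hpt : ∀ z : Σ x : V, G.neighborSet x,
      |(f * g) z.2 - (f * g) z.1| ≤ b * |f z.2 - f z.1| + a * |g z.2 - g z.1| := by
    intro z
    have h1 : (f * g) (z.2 : V) - (f * g) z.1
        = (f z.2 - f z.1) * g z.2 + f z.1 * (g z.2 - g z.1) := by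
      simp only [Pi.mul_apply]; ring
    rw [h1]
    calc |(f z.2 - f z.1) * g z.2 + f z.1 * (g z.2 - g z.1)|
        ≤ |(f z.2 - f z.1) * g z.2| + |f z.1 * (g z.2 - g z.1)| := abs_add_le _ _
      _ = |f z.2 - f z.1| * |g z.2| + |f z.1| * |g z.2 - g z.1| := by
          rw [abs_mul, abs_mul]
      _ ≤ |f z.2 - f z.1| * b + a * |g z.2 - g z.1| := by
          gcongr
          · exact hag _
          · exact haf _
      _ = b * |f z.2 - f z.1| + a * |g z.2 - g z.1| := by ring
  have hptE : ∀ z : Σ x : V, G.neighborSet x,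
      ENNReal.ofReal |(f * g) z.2 - (f * g) z.1| ≤
        ENNReal.ofReal b * ENNReal.ofReal |f z.2 - f z.1|
          + ENNReal.ofReal a * ENNReal.ofReal |g z.2 - g z.1| := by
    intro z
    rw [← ENNReal.ofReal_mul hb0, ← ENNReal.ofReal_mul ha0,
      ← ENNReal.ofReal_add (by positivity) (by positivity)]
    exact ENNReal.ofReal_le_ofReal (hpt z)
  -- scaling helper
  have hscale : ∀ (F : (Σ x : V, G.neighborSet x) → ℝ≥0∞) (c : ℝ≥0∞),
      (∑' z, (c * F z) ^ p) ^ (1 / p) = c * (∑' z, F z ^ p) ^ (1 / p) := by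
    intro F c
    simp_rw [ENNReal.mul_rpow_of_nonneg _ _ hp0.le]
    rw [ENNReal.tsum_mul_left, ENNReal.mul_rpow_of_nonneg _ _ hip.le,
      ← ENNReal.rpow_mul, mul_one_div, div_self hp0.ne', ENNReal.rpow_one]
  -- the key Dirichlet-sum bound
  have key : (Ip G p (f * g)) ^ (1 / p) ≤
      ENNReal.ofReal b * (Ip G p f) ^ (1 / p) + ENNReal.ofReal a * (Ip G p g) ^ (1 / p) := by
    rw [IpEq (f * g), IpEq f, IpEq g]
    calc (∑' z : (Σ x : V, G.neighborSet x),
            ENNReal.ofReal |(f * g) z.2 - (f * g) z.1| ^ p) ^ (1 / p)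
        ≤ (∑' z : (Σ x : V, G.neighborSet x),
            (ENNReal.ofReal b * ENNReal.ofReal |f z.2 - f z.1|
              + ENNReal.ofReal a * ENNReal.ofReal |g z.2 - g z.1|) ^ p) ^ (1 / p) := by
          gcongr with z
          exact hptE z
      _ ≤ (∑' z : (Σ x : V, G.neighborSet x),
              (ENNReal.ofReal b * ENNReal.ofReal |f z.2 - f z.1|) ^ p) ^ (1 / p)
          + (∑' z : (Σ x : V, G.neighborSet x),
              (ENNReal.ofReal a * ENNReal.ofReal |g z.2 - g z.1|) ^ p) ^ (1 / p) :=
          ennreal_Lp_add_le_tsum _ _ hp.le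
      _ = ENNReal.ofReal b * (∑' z : (Σ x : V, G.neighborSet x),
              ENNReal.ofReal |f z.2 - f z.1| ^ p) ^ (1 / p)
          + ENNReal.ofReal a * (∑' z : (Σ x : V, G.neighborSet x),
              ENNReal.ofReal |g z.2 - g z.1| ^ p) ^ (1 / p) := by
          rw [hscale, hscale]
  have hRHSne : ENNReal.ofReal b * (Ip G p f) ^ (1 / p)
      + ENNReal.ofReal a * (Ip G p g) ^ (1 / p) ≠ ∞ :=
    ENNReal.add_ne_top.2
      ⟨ENNReal.mul_ne_top ENNReal.ofReal_ne_top
          (ENNReal.rpow_ne_top_of_nonneg hip.le hfT),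
        ENNReal.mul_ne_top ENNReal.ofReal_ne_top
          (ENNReal.rpow_ne_top_of_nonneg hip.le hgT)⟩
  have hfin : Ip G p (f * g) ≠ ∞ := by
    intro htop
    rw [htop, ENNReal.top_rpow_of_pos hip] at key
    exact hRHSne (top_le_iff.1 key)
  have hmem : f * g ∈ BDp G p := by
    refine ⟨hfin, a * b, fun x => ?_⟩
    rw [Pi.mul_apply, abs_mul]
    exact mul_le_mul (haf x) (hag x) (abs_nonneg _) ha0
  refine ⟨hmem, ?_⟩
  have hsup : supNorm (f * g) ≤ a * b := by
    refine ciSup_le fun x => ?_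
    rw [Pi.mul_apply, abs_mul]
    exact mul_le_mul (haf x) (hag x) (abs_nonneg _) ha0
  have hkeyR : (Ip G p (f * g)).toReal ^ (1 / p)
      ≤ b * (Ip G p f).toReal ^ (1 / p) + a * (Ip G p g).toReal ^ (1 / p) := by
    have h2 := ENNReal.toReal_mono hRHSne key
    rw [ENNReal.toReal_add
        (ENNReal.mul_ne_top ENNReal.ofReal_ne_top (ENNReal.rpow_ne_top_of_nonneg hip.le hfT))
        (ENNReal.mul_ne_top ENNReal.ofReal_ne_top (ENNReal.rpow_ne_top_of_nonneg hip.le hgT)),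
      ENNReal.toReal_mul, ENNReal.toReal_mul, ENNReal.toReal_ofReal hb0,
      ENNReal.toReal_ofReal ha0, ← ENNReal.toReal_rpow, ← ENNReal.toReal_rpow,
      ← ENNReal.toReal_rpow] at h2
    exact h2
  rw [BDpNorm, BDpNorm, BDpNorm, ← ha, ← hb]
  set A := (Ip G p f).toReal ^ (1 / p) with hA
  set B := (Ip G p g).toReal ^ (1 / p) with hB
  have hA0 : 0 ≤ A := Real.rpow_nonneg ENNReal.toReal_nonneg _
  have hB0 : 0 ≤ B := Real.rpow_nonneg ENNReal.toReal_nonneg _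
  calc (Ip G p (f * g)).toReal ^ (1 / p) + supNorm (f * g)
      ≤ (b * A + a * B) + a * b := add_le_add hkeyR hsup
    _ ≤ (A + a) * (B + b) := by nlinarith [mul_nonneg hA0 hB0]
end

section
/- Every D_p-massive subset of V is p-hyperbolic. -/
open Filter Topology
open scoped ENNReal

namespace PHB

variable {V : Type*}

section Aux

lemma tsum_finite_subtype {M : Type*} [AddCommMonoid M] [TopologicalSpace M] [T2Space M]
    {s : Set V} (hs : s.Finite) (f : V → M) :
    ∑' (y : s), f y = ∑ y ∈ hs.toFinset, f y := by
  rw [tsum_subtype]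
  rw [tsum_eq_sum (s := hs.toFinset) (fun x hx => by
    simp only [Set.Finite.mem_toFinset] at hx
    exact Set.indicator_of_notMem hx f)]
  exact Finset.sum_congr rfl fun x hx => Set.indicator_of_mem (hs.mem_toFinset.mp hx) f

lemma IpOn_eq_indicator (G : SimpleGraph V) (p : ℝ) (S : Set V) (f : V → ℝ) :
    IpOn G p S f = ∑' x : V, S.indicator
      (fun x => ∑' y : G.neighborSet x, ENNReal.ofReal (|f (y : V) - f x| ^ p)) x :=
  tsum_subtype S (fun x => ∑' y : G.neighborSet x, ENNReal.ofReal (|f (y : V) - f x| ^ p))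

lemma sum_pairs_le_IpOn (G : SimpleGraph V) (p : ℝ) (S : Set V) (f : V → ℝ)
    (F : Finset (V × V)) (hF : ∀ e ∈ F, e.1 ∈ S ∧ G.Adj e.1 e.2) :
    ∑ e ∈ F, ENNReal.ofReal (|f e.2 - f e.1| ^ p) ≤ IpOn G p S f := by
  classical
  rw [IpOn_eq_indicator]
  set g : V → ℝ≥0∞ := fun x => ∑' y : G.neighborSet x, ENNReal.ofReal (|f (y : V) - f x| ^ p)
    with hg
  set T : Finset V := F.image Prod.fst with hT
  have h1 : ∑ e ∈ F, ENNReal.ofReal (|f e.2 - f e.1| ^ p)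
      = ∑ x ∈ T, ∑ e ∈ F.filter (fun e => e.1 = x), ENNReal.ofReal (|f e.2 - f e.1| ^ p) :=
    (Finset.sum_fiberwise_of_maps_to (fun e he => Finset.mem_image_of_mem _ he) _).symm
  rw [h1]
  have h2 : ∀ x ∈ T, (∑ e ∈ F.filter (fun e => e.1 = x), ENNReal.ofReal (|f e.2 - f e.1| ^ p))
      ≤ S.indicator g x := by
    intro x hx
    obtain ⟨e₀, he₀, he₀x⟩ := Finset.mem_image.mp hx
    have hxS : x ∈ S := he₀x ▸ (hF e₀ he₀).1
    have hgx : g x = ∑' y : V,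
        (G.neighborSet x).indicator (fun y => ENNReal.ofReal (|f y - f x| ^ p)) y :=
      tsum_subtype (G.neighborSet x) (fun y => ENNReal.ofReal (|f y - f x| ^ p))
    rw [Set.indicator_of_mem hxS, hgx]
    calc ∑ e ∈ F.filter (fun e => e.1 = x), ENNReal.ofReal (|f e.2 - f e.1| ^ p)
        = ∑ e ∈ F.filter (fun e => e.1 = x),
            (G.neighborSet x).indicator (fun y => ENNReal.ofReal (|f y - f x| ^ p)) e.2 := by
          refine Finset.sum_congr rfl fun e he => ?_
          obtain ⟨heF, he1⟩ := Finset.mem_filter.mp he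
          have hadj : e.2 ∈ G.neighborSet x := by
            rw [← he1]; exact (hF e heF).2
          rw [Set.indicator_of_mem hadj, he1]
      _ = ∑ y ∈ (F.filter (fun e => e.1 = x)).image Prod.snd,
            (G.neighborSet x).indicator (fun y => ENNReal.ofReal (|f y - f x| ^ p)) y := by
          rw [Finset.sum_image]
          intro a ha b hb hab
          have ha1 := (Finset.mem_filter.mp ha).2
          have hb1 := (Finset.mem_filter.mp hb).2
          exact Prod.ext (ha1.trans hb1.symm) hab
      _ ≤ ∑' y : V, (G.neighborSet x).indicator (fun y => ENNReal.ofReal (|f y - f x| ^ p)) y :=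
          ENNReal.sum_le_tsum _
  calc ∑ x ∈ T, ∑ e ∈ F.filter (fun e => e.1 = x), ENNReal.ofReal (|f e.2 - f e.1| ^ p)
      ≤ ∑ x ∈ T, S.indicator g x := Finset.sum_le_sum h2
    _ ≤ ∑' x : V, S.indicator g x := ENNReal.sum_le_tsum _

lemma sum_pairs_le_toReal (G : SimpleGraph V) {p : ℝ} (hp : 0 < p) (S : Set V) (f : V → ℝ)
    (F : Finset (V × V)) (hF : ∀ e ∈ F, e.1 ∈ S ∧ G.Adj e.1 e.2)
    (htop : IpOn G p S f ≠ ⊤) :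
    ∑ e ∈ F, |f e.2 - f e.1| ^ p ≤ (IpOn G p S f).toReal := by
  have h := sum_pairs_le_IpOn G p S f F hF
  have h2 : (∑ e ∈ F, ENNReal.ofReal (|f e.2 - f e.1| ^ p)).toReal
      = ∑ e ∈ F, |f e.2 - f e.1| ^ p := by
    rw [ENNReal.toReal_sum (fun e _ => ENNReal.ofReal_ne_top)]
    exact Finset.sum_congr rfl fun e _ =>
      ENNReal.toReal_ofReal (Real.rpow_nonneg (abs_nonneg _) _)
  rw [← h2]
  exact ENNReal.toReal_mono htop h

lemma IpOn_le_IpOn (G : SimpleGraph V) {p : ℝ} (hp : 0 ≤ p) (S : Set V) {f g : V → ℝ}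
    (h : ∀ x ∈ S, ∀ y ∈ G.neighborSet x, |g y - g x| ≤ |f y - f x|) :
    IpOn G p S g ≤ IpOn G p S f := by
  refine ENNReal.tsum_le_tsum fun x => ENNReal.tsum_le_tsum fun y => ?_
  exact ENNReal.ofReal_le_ofReal
    (Real.rpow_le_rpow (abs_nonneg _) (h x.1 x.2 y.1 y.2) hp)

lemma IpOn_mono_set (G : SimpleGraph V) (p : ℝ) {S T : Set V} (hST : S ⊆ T) (f : V → ℝ) :
    IpOn G p S f ≤ IpOn G p T f := by
  rw [IpOn_eq_indicator, IpOn_eq_indicator]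
  exact ENNReal.tsum_le_tsum fun x =>
    Set.indicator_le_indicator_of_subset hST (fun _ => bot_le) x

/-- Sum over a symmetric-ish finite family of directed edges, each touching `U`,
is at most twice the Dirichlet sum over `U`. -/
lemma sum_pairs_sym_le (G : SimpleGraph V) {p : ℝ} (hp : 0 < p) (U : Set V) (f : V → ℝ)
    (F : Finset (V × V)) (hF : ∀ e ∈ F, G.Adj e.1 e.2 ∧ (e.1 ∈ U ∨ e.2 ∈ U))
    (htop : IpOn G p U f ≠ ⊤) :
    ∑ e ∈ F, |f e.2 - f e.1| ^ p ≤ 2 * (IpOn G p U f).toReal := by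
  classical
  set F1 := F.filter (fun e => e.1 ∈ U) with hF1
  set F2 := F.filter (fun e => ¬ e.1 ∈ U) with hF2
  have hsplit : ∑ e ∈ F, |f e.2 - f e.1| ^ p
      = ∑ e ∈ F1, |f e.2 - f e.1| ^ p + ∑ e ∈ F2, |f e.2 - f e.1| ^ p :=
    (Finset.sum_filter_add_sum_filter_not F _ _).symm
  have h1 : ∑ e ∈ F1, |f e.2 - f e.1| ^ p ≤ (IpOn G p U f).toReal := by
    refine sum_pairs_le_toReal G hp U f F1 (fun e he => ?_) htop
    obtain ⟨heF, heU⟩ := Finset.mem_filter.mp he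
    exact ⟨heU, (hF e heF).1⟩
  have h2 : ∑ e ∈ F2, |f e.2 - f e.1| ^ p ≤ (IpOn G p U f).toReal := by
    have hswap : ∑ e ∈ F2, |f e.2 - f e.1| ^ p
        = ∑ e ∈ F2.image Prod.swap, |f e.2 - f e.1| ^ p := by
      rw [Finset.sum_image (fun a _ b _ h => Prod.swap_injective h)]
      exact Finset.sum_congr rfl fun e _ => by rw [Prod.snd_swap, Prod.fst_swap, abs_sub_comm]
    rw [hswap]
    refine sum_pairs_le_toReal G hp U f _ (fun e he => ?_) htop
    obtain ⟨e', he', rfl⟩ := Finset.mem_image.mp he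
    obtain ⟨he'F, he'U⟩ := Finset.mem_filter.mp he'
    obtain ⟨hadj, hor⟩ := hF e' he'F
    refine ⟨hor.resolve_left he'U, hadj.symm⟩
  linarith


lemma phi_mul_self {p : ℝ} (hp : p ≠ 0) (t : ℝ) : (|t| ^ (p - 2) * t) * t = |t| ^ p := by
  rcases eq_or_ne t 0 with rfl | ht
  · simp [Real.zero_rpow hp]
  · have habs : 0 < |t| := abs_pos.2 ht
    have htt : t * t = |t| * |t| := (abs_mul_abs_self t).symm
    calc (|t| ^ (p - 2) * t) * t = |t| ^ (p - 2) * (|t| * |t|) := by rw [mul_assoc, htt]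
      _ = |t| ^ (p - 2) * (|t| ^ (1:ℝ) * |t| ^ (1:ℝ)) := by rw [Real.rpow_one]
      _ = |t| ^ (p - 2 + 1 + 1) := by
          rw [Real.rpow_add habs, Real.rpow_add habs]; ring
      _ = |t| ^ p := by rw [show p - 2 + 1 + 1 = p by ring]

lemma phi_abs {p : ℝ} (hp : p ≠ 1) (t : ℝ) : |(|t| ^ (p - 2) * t)| = |t| ^ (p - 1) := by
  rcases eq_or_ne t 0 with rfl | ht
  · simp [Real.zero_rpow (sub_ne_zero.mpr hp)]
  · have habs : 0 < |t| := abs_pos.2 ht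
    calc |(|t| ^ (p - 2) * t)| = |t| ^ (p - 2) * |t| := by
          rw [abs_mul, abs_of_nonneg (Real.rpow_nonneg (abs_nonneg t) _)]
      _ = |t| ^ (p - 2) * |t| ^ (1:ℝ) := by rw [Real.rpow_one]
      _ = |t| ^ (p - 2 + 1) := (Real.rpow_add habs _ _).symm
      _ = |t| ^ (p - 1) := by rw [show p - 2 + 1 = p - 1 by ring]

lemma pLap_eq_sum (G : SimpleGraph V) (p : ℝ) (f : V → ℝ) (x : V)
    (hfin : (G.neighborSet x).Finite) :
    pLap G p f x = ∑ y ∈ hfin.toFinset, |f y - f x| ^ (p - 2) * (f y - f x) :=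
  tsum_finite_subtype hfin (fun y => |f y - f x| ^ (p - 2) * (f y - f x))

end Aux

end PHB

open PHB Filter Topology

/-- Every `D_p`-massive subset is `p`-hyperbolic. -/
theorem massive_pHyperbolic {V : Type*} [Countable V] [Infinite V] (G : SimpleGraph V)
    (hG : G.Connected) (hdeg : BoundedDegree G) (p : ℝ) (hp : 1 < p)
    (U : Set V) (hU : DpMassive G p U) : pHyperbolic G p U := by
  classical
  obtain ⟨hUinf, hUconn, hbne, u, ⟨huD, huB⟩, hupos, huharm, hubdry, hulub⟩ := hU
  have hp0 : (0:ℝ) < p := lt_trans one_pos hp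
  have hpne : p ≠ 0 := ne_of_gt hp0
  have hNfin : ∀ x : V, (G.neighborSet x).Finite := fun x => (hdeg.choose_spec x).1
  set Nf : V → Finset V := fun x => (hNfin x).toFinset with hNf
  have hmemN : ∀ x y : V, y ∈ Nf x ↔ G.Adj x y := by
    intro x y
    simp [hNf, Set.Finite.mem_toFinset, SimpleGraph.mem_neighborSet]
  -- the modified potential `w`, equal to `u` on `U` and `0` elsewhere
  set w : V → ℝ := fun x => if x ∈ U then u x else 0 with hwdef
  have hwoff : ∀ x, x ∉ U → w x = 0 := by
    intro x hx; simp only [hwdef]; rw [if_neg hx]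
  have hwU : ∀ x ∈ U, w x = u x := by
    intro x hx; simp only [hwdef]; rw [if_pos hx]
  have hw0 : ∀ x, 0 ≤ w x := by
    intro x; simp only [hwdef]; split
    · exact hupos x
    · exact le_refl 0
  have hwle1 : ∀ x, w x ≤ 1 := by
    intro x; simp only [hwdef]; split
    · exact hulub.1 ⟨x, ‹x ∈ U›, rfl⟩
    · exact zero_le_one
  have hwu : ∀ x ∈ U, ∀ y, G.Adj x y → w y = u y := by
    intro x hx y hadj
    by_cases hyU : y ∈ U
    · exact hwU y hyU
    · rw [hwoff y hyU, hubdry y ⟨hyU, x, hx, hadj.symm⟩]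
  -- finite-sum form of harmonicity for `w`
  have hLap : ∀ x ∈ U, ∑ y ∈ Nf x, |w y - w x| ^ (p - 2) * (w y - w x) = 0 := by
    intro x hx
    have h0 := huharm x hx
    rw [pLap_eq_sum G p u x (hNfin x)] at h0
    rw [← h0]
    refine Finset.sum_congr rfl fun y hy => ?_
    rw [hwu x hx y ((hmemN x y).1 hy), hwU x hx]
  -- find a vertex in `U` with positive potential and a neighbor of different value
  have hzex : ∃ z ∈ U, 0 < w z := by
    by_contra hno
    push_neg at hno
    have hub : (0:ℝ) ∈ upperBounds (u '' U) := by
      rintro _ ⟨x, hxU, rfl⟩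
      have := hno x hxU
      rw [hwU x hxU] at this
      exact this
    have := hulub.2 hub
    norm_num at this
  obtain ⟨z, hzU, hzpos⟩ := hzex
  have hEX : ∃ a ∈ U, 0 < w a ∧ ∃ c, G.Adj a c ∧ w c ≠ w a := by
    by_contra hno
    push_neg at hno
    have hwalk : ∀ (s t : U), (G.induce U).Walk s t → 0 < w (s : V) → w (t : V) = w (s : V) := by
      intro s t q
      induction q with
      | nil => intro _; rfl
      | cons hadj q ih =>
        rename_i s' b' t'
        intro hs
        have hGadj : G.Adj (s' : V) (b' : V) := by simpa using hadj
        have hb : w (b' : V) = w (s' : V) := hno (s' : V) s'.2 hs (b' : V) hGadj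
        have hbpos : 0 < w (b' : V) := hb ▸ hs
        rw [ih hbpos, hb]
    have hall : ∀ t : U, w (t : V) = w z := by
      intro t
      obtain ⟨q⟩ := hUconn.preconnected ⟨z, hzU⟩ t
      exact hwalk _ _ q hzpos
    obtain ⟨b, hbU, y, hyU, hbadj⟩ := hbne
    have h1 : w b = w y := hno y hyU (by rw [hall ⟨y, hyU⟩]; exact hzpos) b hbadj.symm
    have h2 : w b = 0 := hwoff b hbU
    have h3 : w y = w z := hall ⟨y, hyU⟩
    rw [h2, h3] at h1
    exact absurd h1.symm (ne_of_gt hzpos)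
  obtain ⟨a, haU, hapos, c, hac, hcne⟩ := hEX
  refine ⟨hUinf, hUconn, {a}, Set.finite_singleton a, Set.singleton_nonempty a, ?_⟩
  rw [pos_iff_ne_zero]
  intro hcap0
  -- Dirichlet energy of w over U is finite
  have hIpw_le : IpOn G p U w ≤ Ip G p u := by
    refine le_trans (IpOn_le_IpOn G hp0.le U (fun x hx y hy => ?_))
      (IpOn_mono_set G p (Set.subset_univ U) u)
    rw [hwu x hx y hy, hwU x hx]
  have hIpw_top : IpOn G p U w ≠ ⊤ := ne_top_of_le_ne_top huD hIpw_le
  set Cu : ℝ := (IpOn G p U w).toReal with hCu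
  have hCu0 : 0 ≤ Cu := ENNReal.toReal_nonneg
  set q : ℝ := Real.conjExponent p with hq
  have hpq : p.HolderConjugate q := Real.HolderConjugate.conjExponent hp
  set C : ℝ := (2 * Cu) ^ (1 / q) with hC
  have hC0 : 0 ≤ C := Real.rpow_nonneg (by linarith) _
  set κ : ℝ := ∑ x ∈ Nf a, |w a - w x| ^ p with hκ
  have hκpos : 0 < κ := by
    have hcN : c ∈ Nf a := (hmemN a c).2 hac
    have hterm : 0 < |w a - w c| ^ p :=
      Real.rpow_pos_of_pos (abs_pos.2 (sub_ne_zero.2 hcne.symm)) p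
    exact lt_of_lt_of_le hterm
      (Finset.single_le_sum (f := fun x => |w a - w x| ^ p)
        (fun x _ => Real.rpow_nonneg (abs_nonneg _) p) hcN)
  set εr : ℝ := (κ / (C + 1)) ^ p / 2 with hεr
  have hC1 : (0:ℝ) < C + 1 := by linarith
  have hεpos : 0 < εr := by
    have : 0 < κ / (C + 1) := div_pos hκpos hC1
    have := Real.rpow_pos_of_pos this p
    rw [hεr]; linarith
  -- get an admissible test function with small energy
  have hex : ∃ v : V → ℝ,
      (((U ∪ outerBoundary G U) ∩ Function.support v).Finite ∧ ∀ x ∈ ({a} : Set V), v x = 1)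
      ∧ IpOn G p U v < ENNReal.ofReal εr := by
    by_contra hno
    push_neg at hno
    have hle : ENNReal.ofReal εr ≤ pCapacity G p {a} U :=
      le_iInf fun v => le_iInf fun hv => hno v hv
    rw [hcap0, le_zero_iff] at hle
    exact absurd hle (ENNReal.ofReal_pos.mpr hεpos).ne'
  obtain ⟨v, ⟨hvsupp, hva⟩, hvIp⟩ := hex
  have hva1 : v a = 1 := hva a rfl
  -- clamp the test function to [0,1]
  set v' : V → ℝ := fun x => max 0 (min (v x) 1) with hv'def
  have hv'0 : ∀ x, 0 ≤ v' x := fun x => le_max_left 0 _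
  have hv'1 : ∀ x, v' x ≤ 1 := fun x => max_le zero_le_one (min_le_right _ _)
  have hv'a : v' a = 1 := by simp only [hv'def]; rw [hva1]; norm_num
  have hv'lip : ∀ x y : V, |v' y - v' x| ≤ |v y - v x| := by
    intro x y
    simp only [hv'def]
    calc |max 0 (min (v y) 1) - max 0 (min (v x) 1)|
        = |max (min (v y) 1) 0 - max (min (v x) 1) 0| := by rw [max_comm 0, max_comm 0]
      _ ≤ |min (v y) 1 - min (v x) 1| := abs_max_sub_max_le_abs _ _ _
      _ ≤ |v y - v x| := by
          have := abs_min_sub_min_le_max (v y) 1 (v x) 1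
          simpa using this
  have hIpv' : IpOn G p U v' ≤ IpOn G p U v :=
    IpOn_le_IpOn G hp0.le U (fun x _ y _ => hv'lip x y)
  have hlt : IpOn G p U v' < ENNReal.ofReal εr := lt_of_le_of_lt hIpv' hvIp
  have hIv'top : IpOn G p U v' ≠ ⊤ := (lt_of_lt_of_le hlt le_top).ne
  have hIv'r : (IpOn G p U v').toReal ≤ εr := ENNReal.toReal_le_of_le_ofReal hεpos.le hlt.le
  -- the finitely supported product function
  set h : V → ℝ := fun x => w x * v' x with hhdef
  have hKU : ∀ x, h x ≠ 0 → x ∈ U := by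
    intro x hx
    by_contra hxU
    apply hx
    simp only [hhdef]
    rw [hwoff x hxU, zero_mul]
  have hKsub : Function.support h ⊆ (U ∪ outerBoundary G U) ∩ Function.support v := by
    intro x hx
    have hx' : h x ≠ 0 := hx
    refine ⟨Or.inl (hKU x hx'), ?_⟩
    intro hvx
    apply hx'
    simp only [hhdef, hv'def]
    rw [hvx]
    norm_num
  have hKfin : (Function.support h).Finite := hvsupp.subset hKsub
  set Kf : Finset V := hKfin.toFinset with hKfdef
  have hmemKf : ∀ x, x ∈ Kf ↔ h x ≠ 0 := by
    intro x; rw [hKfdef, Set.Finite.mem_toFinset, Function.mem_support]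
  -- the finite set of relevant directed edges
  have hbigfin : (Function.support h ∪ ⋃ x ∈ Function.support h, G.neighborSet x).Finite :=
    hKfin.union (hKfin.biUnion fun x _ => hNfin x)
  set P : Finset (V × V) := (hbigfin.toFinset ×ˢ hbigfin.toFinset).filter
      (fun e => G.Adj e.1 e.2 ∧ (h e.1 ≠ 0 ∨ h e.2 ≠ 0)) with hPdef
  have hmemP : ∀ e : V × V, e ∈ P ↔ G.Adj e.1 e.2 ∧ (h e.1 ≠ 0 ∨ h e.2 ≠ 0) := by
    intro e
    constructor
    · exact fun he => (Finset.mem_filter.mp he).2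
    · rintro ⟨hadj, hor⟩
      have hbig : ∀ x y : V, G.Adj x y → h x ≠ 0 → x ∈ hbigfin.toFinset ∧ y ∈ hbigfin.toFinset := by
        intro x y hxy hhx
        constructor
        · rw [Set.Finite.mem_toFinset]
          exact Or.inl hhx
        · rw [Set.Finite.mem_toFinset]
          exact Or.inr (Set.mem_biUnion hhx hxy)
      refine Finset.mem_filter.mpr ⟨Finset.mem_product.mpr ?_, hadj, hor⟩
      rcases hor with h1 | h2
      · exact hbig e.1 e.2 hadj h1
      · exact ((hbig e.2 e.1 hadj.symm h2).symm : _)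
  -- vanishing of the symmetrized pairing
  set T1 : ℝ := ∑ e ∈ P, (|w e.2 - w e.1| ^ (p - 2) * (w e.2 - w e.1)) * h e.1 with hT1def
  have hT1zero : T1 = 0 := by
    have hres : ∑ e ∈ P.filter (fun e => h e.1 ≠ 0),
        (|w e.2 - w e.1| ^ (p - 2) * (w e.2 - w e.1)) * h e.1 = T1 := by
      rw [hT1def]
      refine Finset.sum_filter_of_ne fun e _ hne h0 => hne ?_
      rw [h0, mul_zero]
    rw [← hres]
    rw [← Finset.sum_fiberwise_of_maps_to (g := Prod.fst) (t := Kf)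
      (fun e he => (hmemKf e.1).2 (Finset.mem_filter.mp he).2) _]
    refine Finset.sum_eq_zero fun x hxK => ?_
    have hxU : x ∈ U := hKU x ((hmemKf x).1 hxK)
    have hfibeq : (P.filter (fun e => h e.1 ≠ 0)).filter (fun e => e.1 = x)
        = (Nf x).image (fun y => (x, y)) := by
      ext e
      simp only [Finset.mem_filter, Finset.mem_image]
      constructor
      · rintro ⟨⟨heP, -⟩, he1⟩
        refine ⟨e.2, (hmemN x e.2).2 (he1 ▸ ((hmemP e).1 heP).1), ?_⟩
        exact Prod.ext he1.symm rfl
      · rintro ⟨y, hy, rfl⟩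
        refine ⟨⟨(hmemP (x, y)).2 ⟨(hmemN x y).1 hy, Or.inl ((hmemKf x).1 hxK)⟩,
          (hmemKf x).1 hxK⟩, rfl⟩
    rw [hfibeq, Finset.sum_image (fun y₁ _ y₂ _ hyy => congrArg Prod.snd hyy)]
    simp only
    rw [← Finset.sum_mul, hLap x hxU, zero_mul]
  have hT2 : ∑ e ∈ P, (|w e.2 - w e.1| ^ (p - 2) * (w e.2 - w e.1)) * h e.2 = -T1 := by
    have hswap : ∑ e ∈ P, (|w e.2 - w e.1| ^ (p - 2) * (w e.2 - w e.1)) * h e.2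
        = ∑ e ∈ P, (|w e.1 - w e.2| ^ (p - 2) * (w e.1 - w e.2)) * h e.1 := by
      refine Finset.sum_nbij' (i := Prod.swap) (j := Prod.swap) ?_ ?_ ?_ ?_ ?_
      · intro e he
        rw [hmemP]
        obtain ⟨hadj, hor⟩ := (hmemP e).1 he
        exact ⟨hadj.symm, hor.symm⟩
      · intro e he
        rw [hmemP]
        obtain ⟨hadj, hor⟩ := (hmemP e).1 he
        exact ⟨hadj.symm, hor.symm⟩
      · intro e _; exact Prod.swap_swap e
      · intro e _; exact Prod.swap_swap e
      · intro e _; rfl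
    rw [hswap, hT1def, ← Finset.sum_neg_distrib]
    refine Finset.sum_congr rfl fun e _ => ?_
    have : w e.1 - w e.2 = -(w e.2 - w e.1) := by ring
    rw [this, abs_neg]
    ring
  have hS0 : ∑ e ∈ P, (|w e.2 - w e.1| ^ (p - 2) * (w e.2 - w e.1)) * (h e.2 - h e.1) = 0 := by
    have : ∀ e ∈ P, (|w e.2 - w e.1| ^ (p - 2) * (w e.2 - w e.1)) * (h e.2 - h e.1)
        = (|w e.2 - w e.1| ^ (p - 2) * (w e.2 - w e.1)) * h e.2
          - (|w e.2 - w e.1| ^ (p - 2) * (w e.2 - w e.1)) * h e.1 := fun e _ => mul_sub _ _ _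
    rw [Finset.sum_congr rfl this, Finset.sum_sub_distrib, hT2, ← hT1def, hT1zero]
    ring
  -- split into the two sums
  set A1 : ℝ := ∑ e ∈ P, |w e.2 - w e.1| ^ p * v' e.2 with hA1def
  set A2 : ℝ := ∑ e ∈ P,
      w e.1 * ((|w e.2 - w e.1| ^ (p - 2) * (w e.2 - w e.1)) * (v' e.2 - v' e.1)) with hA2def
  have hA12 : A1 + A2 = 0 := by
    rw [← hS0, hA1def, hA2def, ← Finset.sum_add_distrib]
    refine Finset.sum_congr rfl fun e _ => ?_
    have hexp : h e.2 - h e.1 = (w e.2 - w e.1) * v' e.2 + w e.1 * (v' e.2 - v' e.1) := by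
      simp only [hhdef]; ring
    rw [hexp]
    have hmulself := phi_mul_self hpne (w e.2 - w e.1)
    calc |w e.2 - w e.1| ^ p * v' e.2
          + w e.1 * (|w e.2 - w e.1| ^ (p - 2) * (w e.2 - w e.1) * (v' e.2 - v' e.1))
        = (|w e.2 - w e.1| ^ (p - 2) * (w e.2 - w e.1) * (w e.2 - w e.1)) * v' e.2
          + w e.1 * (|w e.2 - w e.1| ^ (p - 2) * (w e.2 - w e.1) * (v' e.2 - v' e.1)) := by
          rw [hmulself]
      _ = |w e.2 - w e.1| ^ (p - 2) * (w e.2 - w e.1)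
          * ((w e.2 - w e.1) * v' e.2 + w e.1 * (v' e.2 - v' e.1)) := by ring
  -- lower bound for A1
  have hA1κ : κ ≤ A1 := by
    have haK : h a ≠ 0 := by
      simp only [hhdef]
      rw [hv'a, mul_one]
      exact ne_of_gt hapos
    set Pa : Finset (V × V) := (Nf a).image (fun x => (x, a)) with hPadef
    have hPaP : Pa ⊆ P := by
      intro e he
      obtain ⟨y, hy, rfl⟩ := Finset.mem_image.mp he
      exact (hmemP (y, a)).2 ⟨((hmemN a y).1 hy).symm, Or.inr haK⟩
    have hsum : ∑ e ∈ Pa, |w e.2 - w e.1| ^ p * v' e.2 = κ := by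
      rw [hPadef, Finset.sum_image (fun y₁ _ y₂ _ hyy => congrArg Prod.fst hyy)]
      rw [hκ]
      refine Finset.sum_congr rfl fun y _ => ?_
      rw [hv'a, mul_one]
    rw [← hsum, hA1def]
    refine Finset.sum_le_sum_of_subset_of_nonneg hPaP fun e _ _ =>
      mul_nonneg (Real.rpow_nonneg (abs_nonneg _) _) (hv'0 _)
  -- upper bound for |A2| via Hölder
  have hB1 : ∑ e ∈ P, |w e.2 - w e.1| ^ p ≤ 2 * Cu := by
    refine sum_pairs_sym_le G hp0 U w P (fun e he => ?_) hIpw_top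
    obtain ⟨hadj, hor⟩ := (hmemP e).1 he
    exact ⟨hadj, hor.imp (hKU e.1) (hKU e.2)⟩
  have hB2 : ∑ e ∈ P, |v' e.2 - v' e.1| ^ p ≤ 2 * εr := by
    have := sum_pairs_sym_le G hp0 U v' P (fun e he => ?_) hIv'top
    · exact le_trans this (by linarith)
    obtain ⟨hadj, hor⟩ := (hmemP e).1 he
    exact ⟨hadj, hor.imp (hKU e.1) (hKU e.2)⟩
  have hA2abs : |A2| ≤ C * (κ / (C + 1)) := by
    have hstep1 : |A2| ≤ ∑ e ∈ P, |w e.2 - w e.1| ^ (p - 1) * |v' e.2 - v' e.1| := by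
      rw [hA2def]
      refine (Finset.abs_sum_le_sum_abs _ _).trans (Finset.sum_le_sum fun e _ => ?_)
      rw [abs_mul, abs_mul, phi_abs hp.ne' (w e.2 - w e.1)]
      have hw1 : |w e.1| ≤ 1 := by
        rw [abs_of_nonneg (hw0 e.1)]
        exact hwle1 e.1
      exact mul_le_of_le_one_left
        (mul_nonneg (Real.rpow_nonneg (abs_nonneg _) _) (abs_nonneg _)) hw1
    have hH := Real.inner_le_Lp_mul_Lq (s := P)
      (f := fun e => |w e.2 - w e.1| ^ (p - 1)) (g := fun e => |v' e.2 - v' e.1|) hpq.symm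
    have hfq : ∀ e : V × V, |(|w e.2 - w e.1| ^ (p - 1))| ^ q = |w e.2 - w e.1| ^ p := by
      intro e
      rw [abs_of_nonneg (Real.rpow_nonneg (abs_nonneg _) _), ← Real.rpow_mul (abs_nonneg _),
        hpq.sub_one_mul_conj]
    have hgp : ∀ e : V × V, |(|v' e.2 - v' e.1|)| ^ p = |v' e.2 - v' e.1| ^ p := by
      intro e; rw [abs_abs]
    beta_reduce at hH
    rw [Finset.sum_congr rfl (fun e _ => hfq e), Finset.sum_congr rfl (fun e _ => hgp e)] at hH
    have hfactor1 : (∑ e ∈ P, |w e.2 - w e.1| ^ p) ^ (1 / q) ≤ C := by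
      rw [hC]
      exact Real.rpow_le_rpow
        (Finset.sum_nonneg fun e _ => Real.rpow_nonneg (abs_nonneg _) _) hB1
        (le_of_lt hpq.symm.one_div_pos)
    have hfactor2 : (∑ e ∈ P, |v' e.2 - v' e.1| ^ p) ^ (1 / p) ≤ κ / (C + 1) := by
      have h2ε : 2 * εr = (κ / (C + 1)) ^ p := by rw [hεr]; ring
      have : (∑ e ∈ P, |v' e.2 - v' e.1| ^ p) ^ (1 / p) ≤ (2 * εr) ^ (1 / p) :=
        Real.rpow_le_rpow
          (Finset.sum_nonneg fun e _ => Real.rpow_nonneg (abs_nonneg _) _) hB2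
          (le_of_lt hpq.one_div_pos)
      rw [h2ε, one_div, Real.rpow_rpow_inv (div_nonneg hκpos.le hC1.le) hpne] at this
      rwa [← one_div] at this
    calc |A2| ≤ ∑ e ∈ P, |w e.2 - w e.1| ^ (p - 1) * |v' e.2 - v' e.1| := hstep1
      _ ≤ (∑ e ∈ P, |w e.2 - w e.1| ^ p) ^ (1 / q)
          * (∑ e ∈ P, |v' e.2 - v' e.1| ^ p) ^ (1 / p) := hH
      _ ≤ C * (κ / (C + 1)) :=
          mul_le_mul hfactor1 hfactor2
            (Real.rpow_nonneg (Finset.sum_nonneg fun e _ =>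
              Real.rpow_nonneg (abs_nonneg _) _) _)
            hC0
  -- conclusion
  have hκA2 : κ ≤ |A2| := by
    have hA1A2 : A1 = -A2 := by linarith
    calc κ ≤ A1 := hA1κ
      _ = -A2 := hA1A2
      _ ≤ |A2| := neg_le_abs A2
  have hfinal : κ ≤ C * (κ / (C + 1)) := le_trans hκA2 hA2abs
  have hmul : C * (κ / (C + 1)) * (C + 1) = C * κ := by field_simp
  nlinarith [mul_le_mul_of_nonneg_right hfinal hC1.le, hκpos]
end

section
/- Let h ∈ BHD_p(Γ) and let F be an infinite connected subset of V. Let P_∞ be the set of paths γ = x_0 x_1 x_2 … in P_F for which lim_{n→∞} h(x_n) does not exist. Then λ_p(P_∞) = ∞, i.e. the family of paths in Γ_F along which h fails to converge has infinite extremal length of order p. -/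
open Filter Topology
open scoped ENNReal

open PHB Filter Topology

/-- For `h ∈ BHD_p(Γ)` and an infinite connected `F ⊆ V`, the family of paths
in `Γ_F` along which `h` fails to converge has infinite extremal length. -/
theorem divergence_paths_null {V : Type*} [Countable V] [Infinite V] (G : SimpleGraph V)
    (hG : G.Connected) (hdeg : BoundedDegree G) (p : ℝ) (hp : 1 < p)
    (h : V → ℝ) (hh : h ∈ BHDp G p)
    (F : Set V) (hFinf : F.Infinite) (hFconn : ConnectedSubset G F) :
    pModulus G p
      {γ ∈ pathsIn G F |
        ¬ ∃ c : ℝ, Tendsto (fun n => h (γ n)) atTop (nhds c)} = 0 := by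
  classical
  set Fam := {γ ∈ pathsIn G F |
      ¬ ∃ c : ℝ, Tendsto (fun n => h (γ n)) atTop (nhds c)} with hFam
  set C := Ip G p h with hCdef
  have hCne : C ≠ ∞ := hh.1.1
  have hp0 : (0 : ℝ) < p := lt_trans one_pos hp
  -- the symmetric edge density |dh|
  set g0 : Sym2 V → ℝ≥0∞ :=
    Sym2.lift ⟨fun x y => ENNReal.ofReal |h x - h y|,
      fun x y => by simp only []; rw [abs_sub_comm]⟩ with hg0
  set g1 : Sym2 V → ℝ≥0∞ :=
    Sym2.lift ⟨fun x y => ENNReal.ofReal (|h x - h y| ^ p),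
      fun x y => by simp only []; rw [abs_sub_comm]⟩ with hg1
  -- the edge-set sum of g1 is at most the Dirichlet sum
  have hedge : ∑' e : G.edgeSet, g1 (e : Sym2 V) ≤ C := by
    have hIp : C = ∑' σ : Σ x : V, G.neighborSet x,
        ENNReal.ofReal (|h (σ.2 : V) - h σ.1| ^ p) := by
      rw [hCdef, Ip, IpOn,
        tsum_univ (fun x => ∑' y : G.neighborSet x,
          ENNReal.ofReal (|h (y : V) - h x| ^ p)),
        ← ENNReal.tsum_sigma (fun x (y : G.neighborSet x) =>
          ENNReal.ofReal (|h (y : V) - h x| ^ p))]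
    rw [hIp]
    have hout : ∀ e : G.edgeSet, G.Adj (e : Sym2 V).out.1 (e : Sym2 V).out.2 := by
      intro e
      have he : s((e : Sym2 V).out.1, (e : Sym2 V).out.2) = (e : Sym2 V) := by
        show Quot.mk _ _ = _
        rw [Prod.mk.eta]
        exact Quot.out_eq _
      have := e.2
      rw [← he] at this
      exact (G.mem_edgeSet).mp this
    set φ : G.edgeSet → Σ x : V, G.neighborSet x :=
      fun e => ⟨(e : Sym2 V).out.1, ⟨(e : Sym2 V).out.2, hout e⟩⟩ with hφ
    have hφinj : Function.Injective φ := by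
      intro e e' hee
      have h1 : (e : Sym2 V).out.1 = (e' : Sym2 V).out.1 := congrArg Sigma.fst hee
      have h2 : (e : Sym2 V).out.2 = (e' : Sym2 V).out.2 := by
        have := congrArg (fun σ : Σ x : V, G.neighborSet x => (σ.2 : V)) hee
        simpa using this
      have : (e : Sym2 V) = (e' : Sym2 V) := by
        rw [← Quot.out_eq (e : Sym2 V), ← Quot.out_eq (e' : Sym2 V),
          Prod.ext_iff.mpr ⟨h1, h2⟩]
      exact Subtype.ext this
    have key := ENNReal.tsum_comp_le_tsum_of_injective hφinj
      (fun σ : Σ x : V, G.neighborSet x => ENNReal.ofReal (|h (σ.2 : V) - h σ.1| ^ p))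
    refine le_trans (le_of_eq ?_) key
    refine tsum_congr fun e => ?_
    have he : s((e : Sym2 V).out.1, (e : Sym2 V).out.2) = (e : Sym2 V) := by
      show Quot.mk _ _ = _
      rw [Prod.mk.eta]
      exact Quot.out_eq _
    rw [hg1, ← he, Sym2.lift_mk]
    simp only [hφ, abs_sub_comm]
    rfl
  -- main estimate: for every δ ≠ 0, the modulus is ≤ δ^p * C
  have key : ∀ δ : ℝ≥0∞, δ ≠ 0 → pModulus G p Fam ≤ δ ^ p * C := by
    intro δ hδ
    set ρ : Sym2 V → ℝ≥0∞ := fun e => δ * g0 e with hρdef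
    have hconstr : ∀ γ ∈ Fam, 1 ≤ ∑' n : ℕ, ρ s(γ n, γ (n + 1)) := by
      rintro γ ⟨hγ, hdiv⟩
      have hsum : ∑' n : ℕ, ENNReal.ofReal |h (γ (n + 1)) - h (γ n)| = ∞ := by
        by_contra hne
        have heq : ∀ n, ENNReal.ofReal |h (γ (n + 1)) - h (γ n)|
            = (‖h (γ (n + 1)) - h (γ n)‖₊ : ℝ≥0∞) := by
          intro n
          rw [← enorm_eq_nnnorm, ← ofReal_norm, Real.norm_eq_abs]
        rw [tsum_congr heq] at hne
        have hsummable : Summable (fun n => h (γ (n + 1)) - h (γ n)) := by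
          have h1 := ENNReal.tsum_coe_ne_top_iff_summable.mp hne
          have h2 : Summable (fun n => ‖h (γ (n + 1)) - h (γ n)‖) :=
            NNReal.summable_coe.mpr h1
          exact h2.of_norm
        obtain ⟨L, hL⟩ := hsummable
        refine hdiv ⟨L + h (γ 0), ?_⟩
        have htend := hL.tendsto_sum_nat.add (tendsto_const_nhds (x := h (γ 0)))
        have htel : ∀ n : ℕ,
            (∑ i ∈ Finset.range n, (h (γ (i + 1)) - h (γ i))) + h (γ 0) = h (γ n) := by
          intro n
          rw [Finset.sum_range_sub (fun i => h (γ i)) n]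
          ring
        have hfe : (fun n => h (γ n))
            = fun n => (∑ i ∈ Finset.range n, (h (γ (i + 1)) - h (γ i))) + h (γ 0) :=
          funext fun n => (htel n).symm
        rw [hfe]
        exact htend
      have hrw : ∑' n : ℕ, ρ s(γ n, γ (n + 1))
          = δ * ∑' n : ℕ, ENNReal.ofReal |h (γ (n + 1)) - h (γ n)| := by
        rw [← ENNReal.tsum_mul_left]
        refine tsum_congr fun n => ?_
        rw [hρdef, hg0]
        simp only [Sym2.lift_mk]
        rw [abs_sub_comm]
      rw [hrw, hsum, ENNReal.mul_top hδ]
      exact le_top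
    have hcost : ∑' e : G.edgeSet, ρ (e : Sym2 V) ^ p ≤ δ ^ p * C := by
      have hpow : ∀ e : Sym2 V, ρ e ^ p = δ ^ p * g1 e := by
        intro e
        induction e using Sym2.ind with
        | _ x y =>
          rw [hρdef, hg0, hg1]
          simp only [Sym2.lift_mk]
          rw [ENNReal.mul_rpow_of_nonneg _ _ hp0.le,
            ENNReal.ofReal_rpow_of_nonneg (abs_nonneg _) hp0.le]
      calc ∑' e : G.edgeSet, ρ (e : Sym2 V) ^ p
          = δ ^ p * ∑' e : G.edgeSet, g1 (e : Sym2 V) := by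
            rw [← ENNReal.tsum_mul_left]
            exact tsum_congr fun e => hpow _
        _ ≤ δ ^ p * C := mul_le_mul_right hedge _
    calc pModulus G p Fam ≤ ∑' e : G.edgeSet, ρ (e : Sym2 V) ^ p := by
          rw [pModulus]
          exact iInf_le_of_le ρ (iInf_le _ hconstr)
      _ ≤ δ ^ p * C := hcost
  -- conclude
  refine le_antisymm ?_ (zero_le)
  refine ENNReal.le_of_forall_pos_le_add fun ε hε _ => ?_
  rw [zero_add]
  by_cases hC0 : C = 0
  · calc pModulus G p Fam ≤ (1 : ℝ≥0∞) ^ p * C := key 1 one_ne_zero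
      _ = 0 := by rw [hC0, mul_zero]
      _ ≤ ε := zero_le
  · have hεne : ((ε : ℝ≥0∞)) ≠ 0 := by
      simpa using hε.ne'
    have hdivpos : 0 < (ε : ℝ≥0∞) / C := ENNReal.div_pos hεne hCne
    have hdivne : (ε : ℝ≥0∞) / C ≠ ∞ :=
      (ENNReal.div_lt_top ENNReal.coe_ne_top hC0).ne
    set δ : ℝ≥0∞ := ((ε : ℝ≥0∞) / C) ^ (1 / p) with hδdef
    have hδne : δ ≠ 0 := (ENNReal.rpow_pos hdivpos hdivne).ne'
    have hδp : δ ^ p = (ε : ℝ≥0∞) / C := by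
      rw [hδdef, ← ENNReal.rpow_mul, one_div_mul_cancel hp0.ne', ENNReal.rpow_one]
    calc pModulus G p Fam ≤ δ ^ p * C := key δ hδne
      _ = (ε : ℝ≥0∞) / C * C := by rw [hδp]
      _ = ε := ENNReal.div_mul_cancel hC0 hCne
end
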